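/- arXiv:1512.08476 — 4 statements merged into one kernel-verified Lean document; each statement's English description precedes it below -/
import Mathlib

section
/- Let 𝐓 : ℝ² → ℂ be a continuous function vanishing at infinity, and suppose there exist continuous functions p, q : ℝ → ℝ vanishing at infinity and square-integrable over ℝ such that |𝐓(s,t)| ≤ p(s)q(t) for all s, t ∈ ℝ. Then 𝐓 is a K⁰-kernel; in particular, the Carleman functions 𝐭(s) = conj(𝐓(s,·)) and 𝐭′(s) = 𝐓(·,s) it induces are both continuous maps from ℝ into L² that vanish at infinity in L²-norm. -/
open MeasureTheory Filter Topology ContinuousLinearMap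
open scoped ENNReal NNReal

noncomputable section

/-- `L²(ℝ)`, the complex Hilbert space of square-integrable functions on `ℝ`. -/
abbrev L2 : Type := MeasureTheory.Lp ℂ 2 (MeasureTheory.volume : MeasureTheory.Measure ℝ)

/-- Bounded linear operators on `L²`. -/
abbrev L2op : Type := L2 →L[ℂ] L2

/-- `T` is the integral operator induced by the kernel `K`:
`(Tf)(s) = ∫ K(s,t) f(t) dt` for every `f ∈ L²` and almost every `s`. -/
def IsInducedBy (T : L2op) (K : ℝ → ℝ → ℂ) : Prop :=
  ∀ f : L2, ∀ᵐ s : ℝ, (T f : ℝ → ℂ) s = ∫ t : ℝ, K s t * (f : ℝ → ℂ) t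

/-- `K` is a `K⁰`-kernel with associated Carleman functions `kt`, `kt'`:
`kt s = conj (K s ·)` and `kt' s = K · s` as elements of `L²`, the kernel is
continuous and vanishes at infinity, and both Carleman functions are continuous
and vanish at infinity in `L²`-norm. -/
structure IsK0Kernel (K : ℝ → ℝ → ℂ) (kt kt' : ℝ → L2) : Prop where
  repr_t : ∀ s : ℝ, (kt s : ℝ → ℂ) =ᵐ[volume] fun x => (starRingEnd ℂ) (K s x)
  repr_t' : ∀ s : ℝ, (kt' s : ℝ → ℂ) =ᵐ[volume] fun x => K x s
  cont : Continuous fun p : ℝ × ℝ => K p.1 p.2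
  vanish : Tendsto (fun p : ℝ × ℝ => K p.1 p.2) (cocompact (ℝ × ℝ)) (𝓝 0)
  cont_t : Continuous kt
  vanish_t : Tendsto kt (cocompact ℝ) (𝓝 0)
  cont_t' : Continuous kt'
  vanish_t' : Tendsto kt' (cocompact ℝ) (𝓝 0)

/-- The set `Π(T)` of regular values of `T`: those `λ` for which `I - λT` is invertible. -/
def regularSet (T : L2op) : Set ℂ := {lam : ℂ | IsUnit (1 - lam • T)}

/-- The resolvent `R_λ(T) = (I - λT)⁻¹` (junk value `0` if `λ ∉ Π(T)`). -/
def res (T : L2op) (lam : ℂ) : L2op := Ring.inverse (1 - lam • T)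

/-- The Fredholm resolvent `T_{|λ} = T R_λ(T)`. -/
def fres (T : L2op) (lam : ℂ) : L2op := T * res T lam

/-- The region of boundedness `∇_b({Sₙ})`. -/
def nablaB (S : ℕ → L2op) : Set ℂ :=
  {ζ : ℂ | ζ ≠ 0 ∧ ∃ M : ℝ, 0 < M ∧ ∃ N : ℕ, ∀ n > N,
      ζ ∈ regularSet (S n) ∧ ‖fres (S n) ζ‖ ≤ M}

/-- The region of strong convergence `∇_s({Sₙ})`: the `ζ ∈ ∇_b({Sₙ})` such that
the Fredholm resolvents `S_{n|ζ}` converge in the strong operator topology. -/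
def nablaS (S : ℕ → L2op) : Set ℂ :=
  {ζ : ℂ | ζ ∈ nablaB S ∧
    ∀ f : L2, ∃ g : L2, Tendsto (fun n => fres (S n) ζ f) atTop (𝓝 g)}

/-- Nuclear (trace class) operator on `L²`. -/
def IsNuclear (T : L2op) : Prop :=
  ∃ g h : ℕ → L2, Summable (fun k => ‖g k‖ * ‖h k‖) ∧
    ∀ f : L2, T f = ∑' k : ℕ, (inner ℂ f (g k) : ℂ) • h k

/-- The characteristic function `χ` of the interval `(-τ, τ)`, with complex values. -/
def chi (t : ℝ) (x : ℝ) : ℂ := Set.indicator (Set.Ioo (-t) t) 1 x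

/-- Condition (iv) for a `K⁰`-kernel `K` inducing `T`: the positive reals `τ n`
strictly increase to `+∞`, `P n` is the orthogonal projection given by multiplication
by `χₙ = chi (τ n)`, the subkernels `Kₙ(s,t) = χₙ(s)K(s,t)` and
`K̃ₙ(s,t) = χₙ(s)K(s,t)χₙ(t)` are `K⁰`-kernels, and the induced operators
`Tₙ = PₙT` and `T̃ₙ = PₙTPₙ` are nuclear. -/
structure ConditionIV (K : ℝ → ℝ → ℂ) (T : L2op) (tau : ℕ → ℝ) (P : ℕ → L2op) : Prop where
  pos : ∀ n, 0 < tau n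
  mono : StrictMono tau
  tendsto_top : Tendsto tau atTop atTop
  proj : ∀ n, ∀ f : L2, (P n f : ℝ → ℂ) =ᵐ[volume] fun x => chi (tau n) x * (f : ℝ → ℂ) x
  subker : ∀ n, ∃ kt kt' : ℝ → L2, IsK0Kernel (fun s t => chi (tau n) s * K s t) kt kt'
  subker' : ∀ n, ∃ kt kt' : ℝ → L2,
      IsK0Kernel (fun s t => chi (tau n) s * K s t * chi (tau n) t) kt kt'
  nuclear : ∀ n, IsNuclear (P n * T)
  nuclear' : ∀ n, IsNuclear (P n * T * P n)

/-- `λₙ(λ) = λ(1 - βₙλ)⁻¹`. -/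
def lamn (b : ℕ → ℂ) (lam : ℂ) (n : ℕ) : ℂ := lam * (1 - b n * lam)⁻¹

/-- The resolvent kernel for `K` at `λ` built from the resolvent Carleman function
`𝐭'_{|λ}(t) = R_λ(T)(kt' t)`:  `𝐓_{|λ}(s,t) = λ⟨𝐭'_{|λ}(t), 𝐭(s)⟩ + 𝐓(s,t)`
(the paper's inner product `⟨a,b⟩ = ∫ a conj b` is `inner b a` in Mathlib). -/
def resKer (T : L2op) (K : ℝ → ℝ → ℂ) (kt kt' : ℝ → L2) (lam : ℂ) (s t : ℝ) : ℂ :=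
  lam * (inner ℂ (kt s) (res T lam (kt' t)) : ℂ) + K s t

/-- The resolvent kernel for the subkernel `Kₙ` at `λ`:
`𝐓_{n|λ}(s,t) = λ χₙ(s) ⟨𝐭'_{n|λ}(t), 𝐭(s)⟩ + 𝐓ₙ(s,t)`, where
`𝐭'_{n|λ}(t) = R_λ(Tₙ) Pₙ (kt' t)` and `𝐓ₙ(s,t) = χₙ(s) 𝐓(s,t)`. -/
def resKerN (T : L2op) (K : ℝ → ℝ → ℂ) (kt kt' : ℝ → L2) (taun : ℝ) (Pn : L2op)
    (lam : ℂ) (s t : ℝ) : ℂ :=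
  lam * chi taun s * (inner ℂ (kt s) (res (Pn * T) lam (Pn (kt' t))) : ℂ) + chi taun s * K s t

/-- `R` is a resolvent kernel for the `K⁰`-kernel `K` at `λ` (Definition 2 of the paper):
`R` is a `K⁰`-kernel satisfying the two simultaneous integral equations and the
square-integrability condition. -/
def IsResolventKernel (K : ℝ → ℝ → ℂ) (lam : ℂ) (R : ℝ → ℝ → ℂ) : Prop :=
  (∃ rt rt' : ℝ → L2, IsK0Kernel R rt rt') ∧
  (∀ s t : ℝ, R s t - lam * ∫ x : ℝ, K s x * R x t = K s t) ∧
  (∀ s t : ℝ, R s t - lam * ∫ x : ℝ, R s x * K x t = K s t) ∧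
  (∀ f : L2, ∫⁻ s : ℝ, ((‖∫ t : ℝ, R s t * (f : ℝ → ℂ) t‖₊ : ℝ≥0) : ℝ≥0∞) ^ 2 < ⊤)


lemma aux_kernel (K : ℝ → ℝ → ℂ) (hc : Continuous fun pr : ℝ × ℝ => K pr.1 pr.2)
    (p q : ℝ → ℝ) (hpc : Continuous p)
    (hpv : Tendsto p (cocompact ℝ) (𝓝 0)) (hq2 : MemLp q 2 (volume : Measure ℝ))
    (hbound : ∀ s t : ℝ, ‖K s t‖ ≤ |p s| * |q t|) :
    ∃ kt : ℝ → L2, (∀ s, (kt s : ℝ → ℂ) =ᵐ[volume] fun x => K s x) ∧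
      Continuous kt ∧ Tendsto kt (cocompact ℝ) (𝓝 0) := by
  have hKs : ∀ s : ℝ, Continuous fun t => K s t := fun s => hc.comp (Continuous.prodMk_right s)
  have hmem : ∀ s : ℝ, MemLp (fun t => K s t) 2 (volume : Measure ℝ) := by
    intro s
    refine hq2.of_le_mul (c := |p s|) (hKs s).aestronglyMeasurable ?_
    filter_upwards with t
    simpa [Real.norm_eq_abs] using hbound s t
  refine ⟨fun s => (hmem s).toLp _, fun s => (hmem s).coeFn_toLp, ?_, ?_⟩
  · -- continuity
    rw [continuous_iff_continuousAt]
    intro s₀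
    rw [ContinuousAt, tendsto_iff_norm_sub_tendsto_zero]
    -- norm of difference
    have hnorm : ∀ s : ℝ, ‖(hmem s).toLp _ - (hmem s₀).toLp _‖
        = (eLpNorm (fun t => K s t - K s₀ t) 2 volume).toReal := by
      intro s
      rw [← MemLp.toLp_sub, Lp.norm_toLp]
      rfl
    simp only [hnorm]
    -- compact bound
    obtain ⟨z, hz, hzmax⟩ := (isCompact_closedBall s₀ 1).exists_isMaxOn
      ⟨s₀, Metric.mem_closedBall_self zero_le_one⟩ hpc.abs.continuousOn
    set M : ℝ := |p z| with hM
    set bound : ℝ → ℝ≥0∞ := fun t => (‖2 * M * q t‖₊ : ℝ≥0∞) ^ (2 : ℝ) with hbdef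
    have hfin : ∫⁻ t, bound t ∂(volume : Measure ℝ) ≠ ⊤ := by
      have h2 : MemLp (fun t => 2 * M * q t) 2 (volume : Measure ℝ) := hq2.const_mul _
      have := lintegral_rpow_enorm_lt_top_of_eLpNorm_lt_top (p := (2 : ℝ≥0∞))
        two_ne_zero (by norm_num) h2.2
      simpa [hbdef, enorm_eq_nnnorm] using this.ne
    have hL : Tendsto (fun s => ∫⁻ t, (‖K s t - K s₀ t‖₊ : ℝ≥0∞) ^ (2 : ℝ) ∂volume)
        (𝓝 s₀) (𝓝 0) := by
      have := tendsto_lintegral_filter_of_dominated_convergence (μ := (volume : Measure ℝ))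
          (l := 𝓝 s₀)
          (F := fun s t => (‖K s t - K s₀ t‖₊ : ℝ≥0∞) ^ (2 : ℝ)) (f := fun _ => 0) bound
          ?_ ?_ hfin ?_
      · simpa using this
      · refine Eventually.of_forall fun s => ?_
        exact (ENNReal.continuous_rpow_const.comp
          (ENNReal.continuous_coe.comp ((hKs s).sub (hKs s₀)).nnnorm)).measurable
      · filter_upwards [Metric.closedBall_mem_nhds s₀ zero_lt_one] with s hs
        filter_upwards with t
        have h1 : ‖K s t - K s₀ t‖ ≤ ‖2 * M * q t‖ := by
          have h2 := (norm_sub_le _ _).trans (add_le_add (hbound s t) (hbound s₀ t))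
          have hps : |p s| ≤ M := hzmax hs
          have hps₀ : |p s₀| ≤ M := hzmax (Metric.mem_closedBall_self zero_le_one)
          have : ‖K s t - K s₀ t‖ ≤ (M + M) * |q t| := by
            refine h2.trans ?_
            rw [add_mul]
            exact add_le_add (mul_le_mul_of_nonneg_right hps (abs_nonneg _))
              (mul_le_mul_of_nonneg_right hps₀ (abs_nonneg _))
          have e1 : (M + M) * |q t| = 2 * M * |q t| := by ring
          have e2 : 2 * M * |q t| ≤ |2 * M * q t| := by
            rw [abs_mul]
            exact mul_le_mul_of_nonneg_right (le_abs_self _) (abs_nonneg _)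
          rw [Real.norm_eq_abs (2 * M * q t)]
          exact this.trans (e1.le.trans e2)
        exact ENNReal.rpow_le_rpow (by exact_mod_cast h1) (by norm_num)
      · refine Eventually.of_forall fun t => ?_
        have h1 : Tendsto (fun s => K s t - K s₀ t) (𝓝 s₀) (𝓝 0) := by
          have h2 : Tendsto (fun s => K s t) (𝓝 s₀) (𝓝 (K s₀ t)) :=
            ((hc.comp (Continuous.prodMk_left t)).tendsto s₀)
          simpa using h2.sub_const (K s₀ t)
        have h2 := ((ENNReal.continuous_rpow_const (y := (2 : ℝ))).comp
          (ENNReal.continuous_coe.comp (continuous_nnnorm (E := ℂ)))).tendsto (0 : ℂ)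
        have h3 := h2.comp h1
        simpa [ENNReal.zero_rpow_of_pos, Function.comp_def] using h3
    have heL : Tendsto (fun s => eLpNorm (fun t => K s t - K s₀ t) 2 volume) (𝓝 s₀) (𝓝 0) := by
      have hrw : ∀ s : ℝ, eLpNorm (fun t => K s t - K s₀ t) 2 volume
          = (∫⁻ t, (‖K s t - K s₀ t‖₊ : ℝ≥0∞) ^ (2 : ℝ) ∂volume) ^ (1 / (2 : ℝ)) := by
        intro s
        rw [eLpNorm_eq_lintegral_rpow_enorm_toReal two_ne_zero (by norm_num)]
        norm_num [enorm_eq_nnnorm]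
      simp only [hrw]
      have h := (ENNReal.continuous_rpow_const (y := 1 / (2 : ℝ))).tendsto 0
      have h2 := h.comp hL
      simpa [ENNReal.zero_rpow_of_pos, Function.comp_def] using h2
    have := (ENNReal.tendsto_toReal (a := 0) (by simp)).comp heL
    simpa [Function.comp_def] using this
  · -- vanishing at infinity
    rw [tendsto_zero_iff_norm_tendsto_zero]
    have hb : ∀ s : ℝ, ‖(hmem s).toLp _‖ ≤ |p s| * (eLpNorm q 2 volume).toReal := by
      intro s
      rw [Lp.norm_toLp]
      have h1 : eLpNorm (fun t => K s t) 2 volume ≤ eLpNorm (fun t => |p s| * q t) 2 volume := by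
        refine eLpNorm_mono fun t => ?_
        rw [Real.norm_eq_abs, abs_mul, abs_abs]
        exact hbound s t
      have h2 : eLpNorm (fun t => |p s| * q t) 2 volume = ‖|p s|‖₊ • eLpNorm q 2 volume := by
        have : (fun t => |p s| * q t) = (|p s|) • q := by
          funext t; simp [Pi.smul_apply, smul_eq_mul]
        rw [this, eLpNorm_const_smul, ENNReal.smul_def, smul_eq_mul, enorm_eq_nnnorm]
      rw [h2] at h1
      have hne : ‖|p s|‖₊ • eLpNorm q 2 volume ≠ ⊤ := by
        rw [ENNReal.smul_def, smul_eq_mul]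
        exact ENNReal.mul_ne_top ENNReal.coe_ne_top hq2.2.ne
      refine (ENNReal.toReal_mono hne h1).trans ?_
      rw [ENNReal.smul_def, smul_eq_mul, ENNReal.toReal_mul, ENNReal.coe_toReal,
        coe_nnnorm, Real.norm_eq_abs, abs_abs]
    have h0 : Tendsto (fun s => |p s| * (eLpNorm q 2 volume).toReal) (cocompact ℝ) (𝓝 0) := by
      have := (hpv.abs).mul_const ((eLpNorm q 2 volume).toReal)
      simpa using this
    exact squeeze_zero' (Eventually.of_forall fun s => norm_nonneg _)
      (Eventually.of_forall hb) h0

theorem statement14 (K : ℝ → ℝ → ℂ)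
    (hc : Continuous fun p : ℝ × ℝ => K p.1 p.2)
    (hv : Tendsto (fun p : ℝ × ℝ => K p.1 p.2) (cocompact (ℝ × ℝ)) (𝓝 0))
    (p q : ℝ → ℝ) (hpc : Continuous p) (hqc : Continuous q)
    (hpv : Tendsto p (cocompact ℝ) (𝓝 0)) (hqv : Tendsto q (cocompact ℝ) (𝓝 0))
    (hp2 : MemLp p 2 (volume : Measure ℝ)) (hq2 : MemLp q 2 (volume : Measure ℝ))
    (hbound : ∀ s t : ℝ, ‖K s t‖ ≤ p s * q t) :
    ∃ kt kt' : ℝ → L2, IsK0Kernel K kt kt' := by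
  have hb' : ∀ s t : ℝ, ‖K s t‖ ≤ |p s| * |q t| := fun s t =>
    (hbound s t).trans ((le_abs_self _).trans_eq (abs_mul _ _))
  obtain ⟨kt, hktr, hktc, hktv⟩ := aux_kernel (fun s t => (starRingEnd ℂ) (K s t))
      (continuous_star.comp hc) p q hpc hpv hq2
      (fun s t => by rw [RCLike.norm_conj]; exact hb' s t)
  obtain ⟨kt', hktr', hktc', hktv'⟩ := aux_kernel (fun s t => K t s)
      (hc.comp continuous_swap) q p hqc hqv hp2
      (fun s t => (hb' t s).trans_eq (mul_comm _ _))
  exact ⟨kt, kt', hktr, hktr', hc, hv, hktc, hktv, hktc', hktv'⟩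
end
end

section
/- Let P and Q be bounded linear operators on L² induced respectively by K⁰-kernels 𝐏 and 𝐐, with Carleman functions 𝐩, 𝐩′ and 𝐪, 𝐪′. Then the convolution 𝐂(s,t) = ∫ 𝐏(s,ξ)𝐐(ξ,t) dξ exists at every point (s,t) ∈ ℝ² and equals ⟨𝐪′(t), 𝐩(s)⟩, the function 𝐂 is a K⁰-kernel inducing the product operator PQ, and its Carleman functions are 𝐜(s) = Q*(𝐩(s)) and 𝐜′(s) = P(𝐪′(s)) for every s ∈ ℝ. -/
open MeasureTheory Filter Topology ContinuousLinearMap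
open scoped ENNReal NNReal

noncomputable section

lemma exists_bound' {f : ℝ → L2} (hc : Continuous f) (hv : Tendsto f (cocompact ℝ) (𝓝 0)) :
    ∃ C : ℝ, 0 ≤ C ∧ ∀ x, ‖f x‖ ≤ C := by
  have h1 : ∀ᶠ x in cocompact ℝ, ‖f x‖ ≤ 1 := by
    have := hv.eventually (Metric.closedBall_mem_nhds (0 : L2) one_pos)
    filter_upwards [this] with x hx
    simpa [dist_zero_right] using hx
  obtain ⟨K, hK, hK1⟩ := Filter.hasBasis_cocompact.eventually_iff.mp h1
  obtain ⟨C, hC⟩ := hK.exists_bound_of_continuousOn hc.continuousOn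
  refine ⟨max C 1, le_trans zero_le_one (le_max_right _ _), fun x => ?_⟩
  by_cases hx : x ∈ K
  · exact (hC x hx).trans (le_max_left _ _)
  · exact (hK1 hx).trans (le_max_right _ _)

lemma integral_norm_mul_le' (f g : L2) :
    ∫ ξ : ℝ, ‖(f : ℝ → ℂ) ξ‖ * ‖(g : ℝ → ℂ) ξ‖ ≤ ‖f‖ * ‖g‖ := by
  set F : Lp ℝ 2 (volume : Measure ℝ) := ((Lp.memLp f).norm).toLp _
  set G : Lp ℝ 2 (volume : Measure ℝ) := ((Lp.memLp g).norm).toLp _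
  have hF : (F : ℝ → ℝ) =ᵐ[volume] fun ξ => ‖(f : ℝ → ℂ) ξ‖ := MemLp.coeFn_toLp _
  have hG : (G : ℝ → ℝ) =ᵐ[volume] fun ξ => ‖(g : ℝ → ℂ) ξ‖ := MemLp.coeFn_toLp _
  have h1 : ∫ ξ : ℝ, ‖(f : ℝ → ℂ) ξ‖ * ‖(g : ℝ → ℂ) ξ‖ = (inner ℝ F G : ℝ) := by
    rw [MeasureTheory.L2.inner_def]
    refine integral_congr_ae ?_
    filter_upwards [hF, hG] with ξ h1 h2
    simp [h1, h2, RCLike.inner_apply, mul_comm]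
  have h2 : ‖F‖ = ‖f‖ := by rw [Lp.norm_toLp, Lp.norm_def, eLpNorm_norm]
  have h3 : ‖G‖ = ‖g‖ := by rw [Lp.norm_toLp, Lp.norm_def, eLpNorm_norm]
  calc ∫ ξ : ℝ, ‖(f : ℝ → ℂ) ξ‖ * ‖(g : ℝ → ℂ) ξ‖ = (inner ℝ F G : ℝ) := h1
    _ ≤ ‖F‖ * ‖G‖ := real_inner_le_norm F G
    _ = ‖f‖ * ‖g‖ := by rw [h2, h3]

lemma L2.integrableOn_finite (h : L2) {A : Set ℝ} (hfin : volume A < ⊤) :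
    IntegrableOn (h : ℝ → ℂ) A volume := by
  have hm : MemLp (h : ℝ → ℂ) 2 (volume.restrict A) :=
    (Lp.memLp h).mono_measure Measure.restrict_le_self
  haveI : IsFiniteMeasure (volume.restrict A) :=
    ⟨by simpa [Measure.restrict_apply_univ] using hfin⟩
  exact hm.integrable one_le_two

lemma adjoint_repr {Q : L2op} {QK : ℝ → ℝ → ℂ} {qt qt' : ℝ → L2}
    (hQK : IsK0Kernel QK qt qt') (hQ : IsInducedBy Q QK) (g : L2) :
    ((adjoint Q) g : ℝ → ℂ) =ᵐ[volume] fun t => (inner ℂ (qt' t) g : ℂ) := by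
  obtain ⟨Mq, hMq0, hMq⟩ := exists_bound' hQK.cont_t' hQK.vanish_t'
  have hφc : Continuous fun t => (inner ℂ (qt' t) g : ℂ) := hQK.cont_t'.inner continuous_const
  have hslice : ∀ t : ℝ, Integrable (fun ξ => (starRingEnd ℂ) (QK ξ t) * (g : ℝ → ℂ) ξ) volume := by
    intro t
    have h0 : Integrable (fun ξ => (inner ℂ ((qt' t : ℝ → ℂ) ξ) ((g : ℝ → ℂ) ξ) : ℂ)) volume :=
      MeasureTheory.L2.integrable_inner (𝕜 := ℂ) (qt' t) g
    refine h0.congr ?_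
    filter_upwards [hQK.repr_t' t] with ξ hξ
    simp [RCLike.inner_apply, hξ, mul_comm]
  apply ae_eq_of_forall_setIntegral_eq_of_sigmaFinite
  · exact fun A _ hAfin => L2.integrableOn_finite _ hAfin
  · intro A hA hAfin
    haveI : IsFiniteMeasure (volume.restrict A) :=
      ⟨by simpa [Measure.restrict_apply_univ] using hAfin⟩
    refine Integrable.mono' (integrable_const (Mq * ‖g‖)) hφc.aestronglyMeasurable ?_
    refine Eventually.of_forall fun t => ?_
    calc ‖(inner ℂ (qt' t) g : ℂ)‖ ≤ ‖qt' t‖ * ‖g‖ := norm_inner_le_norm _ _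
      _ ≤ Mq * ‖g‖ := mul_le_mul_of_nonneg_right (hMq t) (norm_nonneg g)
  · intro A hA hAfin
    haveI : IsFiniteMeasure (volume.restrict A) :=
      ⟨by simpa [Measure.restrict_apply_univ] using hAfin⟩
    have hmeas : AEStronglyMeasurable (fun p : ℝ × ℝ => (starRingEnd ℂ) (QK p.2 p.1) * (g : ℝ → ℂ) p.2)
        ((volume.restrict A).prod volume) := by
      have hc : Continuous fun p : ℝ × ℝ => (starRingEnd ℂ) (QK p.2 p.1) :=
        Complex.continuous_conj.comp (hQK.cont.comp (continuous_snd.prodMk continuous_fst))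
      exact hc.aestronglyMeasurable.mul (Lp.aestronglyMeasurable g).comp_snd
    have hint : Integrable (fun p : ℝ × ℝ => (starRingEnd ℂ) (QK p.2 p.1) * (g : ℝ → ℂ) p.2)
        ((volume.restrict A).prod volume) := by
      rw [integrable_prod_iff hmeas]
      constructor
      · exact Eventually.of_forall fun t => hslice t
      · refine Integrable.mono' (integrable_const (Mq * ‖g‖))
          hmeas.norm.integral_prod_right' (Eventually.of_forall fun t => ?_)
        have hb : ∫ ξ : ℝ, ‖(starRingEnd ℂ) (QK ξ t) * (g : ℝ → ℂ) ξ‖ ≤ Mq * ‖g‖ := by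
          have he : ∫ ξ : ℝ, ‖(starRingEnd ℂ) (QK ξ t) * (g : ℝ → ℂ) ξ‖
              = ∫ ξ : ℝ, ‖(qt' t : ℝ → ℂ) ξ‖ * ‖(g : ℝ → ℂ) ξ‖ := by
            refine integral_congr_ae ?_
            filter_upwards [hQK.repr_t' t] with ξ hξ
            simp [hξ, norm_mul]
          rw [he]
          exact (integral_norm_mul_le' (qt' t) g).trans
            (mul_le_mul_of_nonneg_right (hMq t) (norm_nonneg g))
        have hnn : 0 ≤ ∫ ξ : ℝ, ‖(starRingEnd ℂ) (QK ξ t) * (g : ℝ → ℂ) ξ‖ :=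
          integral_nonneg fun ξ => norm_nonneg _
        rw [Real.norm_of_nonneg hnn]
        exact hb
    set χ : L2 := indicatorConstLp 2 hA hAfin.ne (1 : ℂ) with hχdef
    have hLHS : ∫ t in A, ((adjoint Q) g : ℝ → ℂ) t = (inner ℂ χ ((adjoint Q) g) : ℂ) :=
      (MeasureTheory.L2.inner_indicatorConstLp_one hA hAfin.ne _).symm
    have hQχ : ∀ᵐ ξ : ℝ, (Q χ : ℝ → ℂ) ξ = ∫ t in A, QK ξ t := by
      filter_upwards [hQ χ] with ξ hξ
      rw [hξ]
      have : ∫ t : ℝ, QK ξ t * (χ : ℝ → ℂ) t = ∫ t : ℝ, A.indicator (fun t => QK ξ t) t := by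
        refine integral_congr_ae ?_
        filter_upwards [indicatorConstLp_coeFn (p := 2) (hs := hA) (hμs := hAfin.ne) (c := (1:ℂ))] with t ht
        rw [ht]
        by_cases h : t ∈ A <;> simp [h]
      rw [this, integral_indicator hA]
    have hL : (inner ℂ χ ((adjoint Q) g) : ℂ)
        = ∫ ξ : ℝ, (starRingEnd ℂ) (∫ t in A, QK ξ t) * (g : ℝ → ℂ) ξ := by
      rw [ContinuousLinearMap.adjoint_inner_right, MeasureTheory.L2.inner_def]
      refine integral_congr_ae ?_
      filter_upwards [hQχ] with ξ hξ
      simp [RCLike.inner_apply, hξ, mul_comm]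
    have hR : ∫ t in A, (inner ℂ (qt' t) g : ℂ)
        = ∫ t in A, ∫ ξ : ℝ, (starRingEnd ℂ) (QK ξ t) * (g : ℝ → ℂ) ξ := by
      refine integral_congr_ae (Eventually.of_forall fun t => ?_)
      show (inner ℂ (qt' t) g : ℂ) = ∫ ξ : ℝ, (starRingEnd ℂ) (QK ξ t) * (g : ℝ → ℂ) ξ
      rw [MeasureTheory.L2.inner_def]
      refine integral_congr_ae ?_
      filter_upwards [hQK.repr_t' t] with ξ hξ
      simp [RCLike.inner_apply, hξ, mul_comm]
    have hswap : ∫ t in A, ∫ ξ : ℝ, (starRingEnd ℂ) (QK ξ t) * (g : ℝ → ℂ) ξ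
        = ∫ ξ : ℝ, ∫ t in A, (starRingEnd ℂ) (QK ξ t) * (g : ℝ → ℂ) ξ :=
      integral_integral_swap hint
    rw [hLHS, hL, hR, hswap]
    refine integral_congr_ae (Eventually.of_forall fun ξ => ?_)
    show (starRingEnd ℂ) (∫ t in A, QK ξ t) * (g : ℝ → ℂ) ξ
        = ∫ t in A, (starRingEnd ℂ) (QK ξ t) * (g : ℝ → ℂ) ξ
    rw [integral_mul_const, ← integral_conj]

theorem statement17 (P Q : L2op) (PK QK : ℝ → ℝ → ℂ)
    (pt pt' qt qt' : ℝ → L2)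
    (hPK : IsK0Kernel PK pt pt') (hQK : IsK0Kernel QK qt qt')
    (hP : IsInducedBy P PK) (hQ : IsInducedBy Q QK) :
    (∀ s t : ℝ, Integrable (fun x : ℝ => PK s x * QK x t) volume ∧
        ∫ x : ℝ, PK s x * QK x t = (inner ℂ (pt s) (qt' t) : ℂ)) ∧
    IsK0Kernel (fun s t => (inner ℂ (pt s) (qt' t) : ℂ))
        (fun s => (adjoint Q) (pt s)) (fun s => P (qt' s)) ∧
    IsInducedBy (P * Q) (fun s t => (inner ℂ (pt s) (qt' t) : ℂ)) := by
  obtain ⟨Mp, hMp0, hMp⟩ := exists_bound' hPK.cont_t hPK.vanish_t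
  obtain ⟨Mq, hMq0, hMq⟩ := exists_bound' hQK.cont_t' hQK.vanish_t'
  refine ⟨?_, ?_, ?_⟩
  · -- Part 1
    intro s t
    have hae : (fun x : ℝ => PK s x * QK x t) =ᵐ[volume]
        fun x => (inner ℂ ((pt s : ℝ → ℂ) x) ((qt' t : ℝ → ℂ) x) : ℂ) := by
      filter_upwards [hPK.repr_t s, hQK.repr_t' t] with x h1 h2
      simp [RCLike.inner_apply, h1, h2, mul_comm]
    refine ⟨(MeasureTheory.L2.integrable_inner (𝕜 := ℂ) (pt s) (qt' t)).congr hae.symm, ?_⟩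
    rw [MeasureTheory.L2.inner_def]
    exact integral_congr_ae hae
  · -- Part 2: K⁰-kernel
    refine ⟨?_, ?_, ?_, ?_, ?_, ?_, ?_, ?_⟩
    · intro s
      refine (adjoint_repr hQK hQ (pt s)).trans (Eventually.of_forall fun x => ?_)
      exact (inner_conj_symm _ _).symm
    · intro s
      filter_upwards [hP (qt' s)] with x hx
      rw [hx]
      show ∫ t : ℝ, PK x t * (qt' s : ℝ → ℂ) t = (inner ℂ (pt x) (qt' s) : ℂ)
      rw [MeasureTheory.L2.inner_def]
      refine integral_congr_ae ?_
      filter_upwards [hPK.repr_t x] with t ht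
      simp [RCLike.inner_apply, ht, mul_comm]
    · exact (hPK.cont_t.comp continuous_fst).inner (hQK.cont_t'.comp continuous_snd)
    · have h1 : Tendsto (fun p : ℝ × ℝ => (inner ℂ (pt p.1) (qt' p.2) : ℂ))
          (comap Prod.fst (cocompact ℝ)) (𝓝 0) := by
        refine squeeze_zero_norm (a := fun p : ℝ × ℝ => ‖pt p.1‖ * Mq) (fun p => ?_) ?_
        · exact (norm_inner_le_norm _ _).trans
            (mul_le_mul_of_nonneg_left (hMq p.2) (norm_nonneg _))
        · have hcomp : Tendsto (fun p : ℝ × ℝ => pt p.1)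
              (comap Prod.fst (cocompact ℝ)) (𝓝 0) := hPK.vanish_t.comp tendsto_comap
          simpa using hcomp.norm.mul_const Mq
      have h2 : Tendsto (fun p : ℝ × ℝ => (inner ℂ (pt p.1) (qt' p.2) : ℂ))
          (comap Prod.snd (cocompact ℝ)) (𝓝 0) := by
        refine squeeze_zero_norm (a := fun p : ℝ × ℝ => Mp * ‖qt' p.2‖) (fun p => ?_) ?_
        · exact (norm_inner_le_norm _ _).trans
            (mul_le_mul_of_nonneg_right (hMp p.1) (norm_nonneg _))
        · have hcomp : Tendsto (fun p : ℝ × ℝ => qt' p.2)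
              (comap Prod.snd (cocompact ℝ)) (𝓝 0) := hQK.vanish_t'.comp tendsto_comap
          simpa using hcomp.norm.const_mul Mp
      have hco : Tendsto (fun p : ℝ × ℝ => (inner ℂ (pt p.1) (qt' p.2) : ℂ))
          ((cocompact ℝ).coprod (cocompact ℝ)) (𝓝 0) := by
        rw [Filter.coprod]
        exact tendsto_sup.2 ⟨h1, h2⟩
      rwa [Filter.coprod_cocompact] at hco
    · exact (adjoint Q).continuous.comp hPK.cont_t
    · simpa [Function.comp_def] using ((adjoint Q).continuous.tendsto 0).comp hPK.vanish_t
    · exact P.continuous.comp hQK.cont_t'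
    · simpa [Function.comp_def] using (P.continuous.tendsto 0).comp hQK.vanish_t'
  · -- Part 3: induces P * Q
    intro f
    have hmul : (P * Q) f = P (Q f) := rfl
    filter_upwards [hP (Q f)] with s hs
    rw [hmul, hs]
    have e1 : ∫ t : ℝ, PK s t * (Q f : ℝ → ℂ) t = (inner ℂ (pt s) (Q f) : ℂ) := by
      rw [MeasureTheory.L2.inner_def]
      refine integral_congr_ae ?_
      filter_upwards [hPK.repr_t s] with t ht
      simp [RCLike.inner_apply, ht, mul_comm]
    have e3 : (inner ℂ ((adjoint Q) (pt s)) f : ℂ)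
        = ∫ t : ℝ, (inner ℂ (pt s) (qt' t) : ℂ) * (f : ℝ → ℂ) t := by
      rw [MeasureTheory.L2.inner_def]
      refine integral_congr_ae ?_
      filter_upwards [adjoint_repr hQK hQ (pt s)] with t ht
      rw [RCLike.inner_apply, ht, inner_conj_symm, mul_comm]
    rw [e1, ← ContinuousLinearMap.adjoint_inner_left]
    exact e3
end
end

section
/- Let T be a bounded linear operator on L² induced by a K⁰-kernel 𝐓, and define the iterated kernels 𝐓^[1] = 𝐓 and, for n ≥ 2, 𝐓^[n](s,t) = ⟨T^{n−2}(𝐭′(t)), 𝐭(s)⟩ (which equals the (n−1)-fold iterated integral ∫⋯∫ 𝐓(s,ξ₁)⋯𝐓(ξ_{n−1},t) dξ₁⋯dξ_{n−1}). If λ ∈ ℂ satisfies |λ| < 1 / lim_{n→∞} ‖Tⁿ‖^{1/n}, then λ is a regular value for T and the Neumann series Σ_{n=1}^∞ λ^{n−1} 𝐓^[n] converges in the supremum norm on ℝ² to the resolvent kernel 𝐓_{|λ}, where 𝐓_{|λ}(s,t) = λ⟨R_λ(T)(𝐭′(t)), 𝐭(s)⟩ + 𝐓(s,t). -/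
open MeasureTheory Filter Topology ContinuousLinearMap
open scoped ENNReal NNReal

noncomputable section

/-- The iterated kernels: `𝐓^[1] = 𝐓` and, for `n ≥ 2`,
`𝐓^[n](s,t) = ⟨T^(n-2)(𝐭'(t)), 𝐭(s)⟩` (paper inner product). -/
def iterK (T : L2op) (K : ℝ → ℝ → ℂ) (kt kt' : ℝ → L2) (n : ℕ) (s t : ℝ) : ℂ :=
  if n = 1 then K s t else (inner ℂ (kt s) ((T ^ (n - 2)) (kt' t)) : ℂ)

lemma aux_bounded_of_zero_at_infty {E : Type*} [NormedAddCommGroup E] {f : ℝ → E}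
    (hc : Continuous f) (hv : Tendsto f (cocompact ℝ) (𝓝 0)) :
    ∃ C : ℝ, 0 ≤ C ∧ ∀ x, ‖f x‖ ≤ C := by
  have h1 : ∀ᶠ x in cocompact ℝ, ‖f x‖ < 1 := by
    have := Metric.tendsto_nhds.mp hv 1 one_pos
    simpa [dist_zero_right] using this
  obtain ⟨Kc, hKc, hout⟩ := (hasBasis_cocompact.eventually_iff).mp h1
  obtain ⟨C, hC⟩ := hKc.exists_bound_of_continuousOn hc.continuousOn
  refine ⟨max (max C 1) 0, le_max_right _ _, fun x => ?_⟩
  by_cases hx : x ∈ Kc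
  · exact le_trans (hC x hx) (le_trans (le_max_left _ _) (le_max_left _ _))
  · exact le_trans (hout hx).le (le_trans (le_max_right C 1) (le_max_left _ _))

set_option maxHeartbeats 1000000 in
theorem statement18 (T : L2op) (K : ℝ → ℝ → ℂ) (kt kt' : ℝ → L2)
    (hK : IsK0Kernel K kt kt') (hT : IsInducedBy T K)
    (lam : ℂ) (r : ℝ)
    (hr : Tendsto (fun n : ℕ => ‖T ^ n‖ ^ ((n : ℝ)⁻¹)) atTop (𝓝 r))
    (hlam : ‖lam‖ * r < 1) :
    lam ∈ regularSet T ∧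
    Tendsto (fun N : ℕ => ⨆ p : ℝ × ℝ,
        ‖(∑ n ∈ Finset.range N, lam ^ n * iterK T K kt kt' (n + 1) p.1 p.2)
          - resKer T K kt kt' lam p.1 p.2‖)
      atTop (𝓝 (0 : ℝ)) := by
  classical
  set A : L2op := lam • T with hA
  have hr0 : 0 ≤ r :=
    ge_of_tendsto hr (Filter.Eventually.of_forall fun n => Real.rpow_nonneg (norm_nonneg _) _)
  set c : ℝ := (‖lam‖ * r + 1) / 2 with hc
  have hc1 : c < 1 := by rw [hc]; linarith
  have hc0 : 0 ≤ c := by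
    have : 0 ≤ ‖lam‖ * r := mul_nonneg (norm_nonneg _) hr0
    rw [hc]; linarith
  have hclt : ‖lam‖ * r < c := by rw [hc]; linarith
  have hev : ∀ᶠ n : ℕ in atTop, ‖A ^ n‖ ≤ c ^ n := by
    have ht : Tendsto (fun n : ℕ => ‖lam‖ * ‖T ^ n‖ ^ ((n : ℝ)⁻¹)) atTop (𝓝 (‖lam‖ * r)) :=
      hr.const_mul _
    filter_upwards [ht.eventually_lt_const hclt, Filter.eventually_ge_atTop 1] with n hn hn1
    have hn0 : n ≠ 0 := Nat.one_le_iff_ne_zero.mp hn1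
    have hxn : ((‖T ^ n‖ ^ ((n : ℝ)⁻¹)) : ℝ) ^ n = ‖T ^ n‖ :=
      Real.rpow_inv_natCast_pow (norm_nonneg _) hn0
    have hAn : ‖A ^ n‖ = ‖lam‖ ^ n * ‖T ^ n‖ := by
      rw [hA, smul_pow]
      rw [norm_smul (lam ^ n) (T ^ n), norm_pow]
    have h2 := pow_le_pow_left₀
      (mul_nonneg (norm_nonneg lam) (Real.rpow_nonneg (norm_nonneg _) _)) hn.le n
    rw [mul_pow, hxn] at h2
    rw [hAn]; exact h2
  have hsA : Summable (fun n : ℕ => A ^ n) :=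
    Summable.of_norm_bounded_eventually_nat (summable_geometric_of_lt_one hc0 hc1) hev
  set S' : L2op := ∑' n : ℕ, A ^ n with hS'
  have hzero : S' = 1 + ∑' n : ℕ, A ^ (n + 1) := by
    rw [hS', Summable.tsum_eq_zero_add hsA, pow_zero]
  have hmul : (1 - A) * S' = 1 := by
    have hAz : A * S' = ∑' n : ℕ, A ^ (n + 1) := by
      rw [hS', ← Summable.tsum_mul_left A hsA]
      exact tsum_congr fun n => (pow_succ' A n).symm
    rw [sub_mul, one_mul, hAz, hzero]; abel
  have hmul' : S' * (1 - A) = 1 := by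
    have hAz : S' * A = ∑' n : ℕ, A ^ (n + 1) := by
      rw [hS', ← Summable.tsum_mul_right A hsA]
      exact tsum_congr fun n => (pow_succ A n).symm
    rw [mul_sub, mul_one, hAz, hzero]; abel
  set u : L2opˣ := ⟨1 - A, S', hmul, hmul'⟩ with hu
  have hU : IsUnit (1 - lam • T) := ⟨u, rfl⟩
  refine ⟨hU, ?_⟩
  have hres : res T lam = S' := by
    rw [res, ← hA]
    have : (1 : L2op) - A = (u : L2op) := rfl
    rw [this, Ring.inverse_unit]
    rfl
  obtain ⟨C, hC0, hCb⟩ := aux_bounded_of_zero_at_infty hK.cont_t hK.vanish_t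
  obtain ⟨C', hC'0, hC'b⟩ := aux_bounded_of_zero_at_infty hK.cont_t' hK.vanish_t'
  have htail : Tendsto (fun M : ℕ => ‖(∑ k ∈ Finset.range M, A ^ k) - S'‖) atTop (𝓝 0) :=
    tendsto_iff_norm_sub_tendsto_zero.mp hsA.hasSum.tendsto_sum_nat
  set b : ℕ → ℝ := fun N => ‖lam‖ * C * C' * ‖(∑ k ∈ Finset.range (N - 1), A ^ k) - S'‖ with hb
  have hb0 : Tendsto b atTop (𝓝 0) := by
    have h := (htail.comp (tendsto_sub_atTop_nat 1)).const_mul (‖lam‖ * C * C')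
    rw [mul_zero] at h
    exact h
  have hkey : ∀ N : ℕ, 1 ≤ N → ∀ p : ℝ × ℝ,
      ‖(∑ n ∈ Finset.range N, lam ^ n * iterK T K kt kt' (n + 1) p.1 p.2)
        - resKer T K kt kt' lam p.1 p.2‖ ≤ b N := by
    intro N hN p
    obtain ⟨M, rfl⟩ : ∃ M, N = M + 1 := ⟨N - 1, (Nat.succ_pred_eq_of_pos hN).symm⟩
    obtain ⟨s, t⟩ := p
    set x : L2 := kt s
    set y : L2 := kt' t
    have hsum : (∑ n ∈ Finset.range (M + 1), lam ^ n * iterK T K kt kt' (n + 1) s t)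
        = lam * (inner ℂ x ((∑ k ∈ Finset.range M, A ^ k) y) : ℂ) + K s t := by
      rw [Finset.sum_range_succ']
      have h0 : iterK T K kt kt' (0 + 1) s t = K s t := if_pos rfl
      rw [h0, pow_zero, one_mul]
      congr 1
      have hterm : ∀ i, lam ^ (i + 1) * iterK T K kt kt' (i + 1 + 1) s t
          = lam * (lam ^ i * (inner ℂ x ((T ^ i) y) : ℂ)) := by
        intro i
        have : iterK T K kt kt' (i + 1 + 1) s t = (inner ℂ x ((T ^ i) y) : ℂ) := by
          have hidx : i + 1 + 1 - 2 = i := by omega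
          rw [iterK, if_neg (by omega), hidx]
        rw [this, pow_succ']; ring
      rw [Finset.sum_congr rfl fun i _ => hterm i, ← Finset.mul_sum]
      congr 1
      have happ : (∑ k ∈ Finset.range M, A ^ k) y = ∑ k ∈ Finset.range M, lam ^ k • ((T ^ k) y) := by
        rw [ContinuousLinearMap.sum_apply]
        exact Finset.sum_congr rfl fun k _ => by rw [hA, smul_pow]; rfl
      rw [happ, inner_sum]
      exact Finset.sum_congr rfl fun k _ => by rw [inner_smul_right]
    have hresk : resKer T K kt kt' lam s t = lam * (inner ℂ x (S' y) : ℂ) + K s t := by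
      rw [resKer, hres]
    rw [hsum, hresk]
    have hdiff : lam * (inner ℂ x ((∑ k ∈ Finset.range M, A ^ k) y) : ℂ) + K s t
        - (lam * (inner ℂ x (S' y) : ℂ) + K s t)
        = lam * (inner ℂ x (((∑ k ∈ Finset.range M, A ^ k) - S') y) : ℂ) := by
      rw [ContinuousLinearMap.sub_apply, inner_sub_right]; ring
    rw [hdiff, norm_mul]
    have h1 : ‖(inner ℂ x (((∑ k ∈ Finset.range M, A ^ k) - S') y) : ℂ)‖
        ≤ ‖x‖ * (‖(∑ k ∈ Finset.range M, A ^ k) - S'‖ * ‖y‖) :=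
      le_trans (norm_inner_le_norm _ _) (by
        gcongr
        exact ContinuousLinearMap.le_opNorm _ _)
    have h2 : ‖x‖ * (‖(∑ k ∈ Finset.range M, A ^ k) - S'‖ * ‖y‖)
        ≤ C * (‖(∑ k ∈ Finset.range M, A ^ k) - S'‖ * C') := by
      gcongr
      · exact hCb s
      · exact hC'b t
    have hNb : b (M + 1) = ‖lam‖ * C * C' * ‖(∑ k ∈ Finset.range M, A ^ k) - S'‖ := by
      simp only [hb, Nat.add_sub_cancel]
    rw [hNb]
    calc ‖lam‖ * ‖(inner ℂ x (((∑ k ∈ Finset.range M, A ^ k) - S') y) : ℂ)‖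
        ≤ ‖lam‖ * (C * (‖(∑ k ∈ Finset.range M, A ^ k) - S'‖ * C')) := by
          gcongr; exact le_trans h1 h2
      _ = ‖lam‖ * C * C' * ‖(∑ k ∈ Finset.range M, A ^ k) - S'‖ := by ring
  refine tendsto_of_tendsto_of_tendsto_of_le_of_le' tendsto_const_nhds hb0 ?_ ?_
  · filter_upwards [Filter.eventually_ge_atTop 1] with N hN
    have hbdd : BddAbove (Set.range fun p : ℝ × ℝ =>
        ‖(∑ n ∈ Finset.range N, lam ^ n * iterK T K kt kt' (n + 1) p.1 p.2)
          - resKer T K kt kt' lam p.1 p.2‖) := by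
      refine ⟨b N, ?_⟩
      rintro _ ⟨p, rfl⟩
      exact hkey N hN p
    exact le_trans (norm_nonneg _) (le_ciSup hbdd ((0 : ℝ), (0 : ℝ)))
  · filter_upwards [Filter.eventually_ge_atTop 1] with N hN
    exact ciSup_le fun p => hkey N hN p
end
end

section
/- Let T be a bounded linear operator on L² induced by a K⁰-kernel 𝐓 satisfying condition (iv), with subkernel operators Tₙ = PₙT and T̃ₙ = PₙTPₙ. Then for each fixed n ∈ ℕ: Π(Tₙ) = Π(T̃ₙ), and for every λ ∈ Π(Tₙ) the resolvent kernels satisfy 𝐓̃_{n|λ}(s,t) = χₙ(t)·𝐓_{n|λ}(s,t) for all s, t ∈ ℝ, where 𝐓_{n|λ} (resp. 𝐓̃_{n|λ}) denotes the unique K⁰-kernel inducing the Fredholm resolvent Tₙ R_λ(Tₙ) (resp. T̃ₙ R_λ(T̃ₙ)). -/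
open MeasureTheory Filter Topology ContinuousLinearMap
open scoped ENNReal NNReal

noncomputable section

/-- In any ring, `1 - x*y` a unit implies `1 - y*x` is a unit. -/
lemma isUnit_one_sub_swap {R : Type*} [Ring R] (x y : R) (h : IsUnit (1 - x * y)) :
    IsUnit (1 - y * x) := by
  refine ⟨⟨1 - y * x, 1 + y * h.unit.inv * x, ?_, ?_⟩, rfl⟩
  · calc
      (1 - y * x) * (1 + y * (IsUnit.unit h).inv * x) =
          1 - y * x + y * ((1 - x * y) * h.unit.inv) * x := by noncomm_ring
      _ = 1 := by simp only [Units.inv_eq_val_inv, IsUnit.mul_val_inv, mul_one, sub_add_cancel]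
  · calc
      (1 + y * (IsUnit.unit h).inv * x) * (1 - y * x) =
          1 - y * x + y * (h.unit.inv * (1 - x * y)) * x := by noncomm_ring
      _ = 1 := by simp only [Units.inv_eq_val_inv, IsUnit.val_inv_mul, mul_one, sub_add_cancel]

/-- A conull set meets every open set densely. -/
lemma closure_subset_closure_inter {E U : Set ℝ} (hU : IsOpen U) (hE : volume Eᶜ = 0) :
    closure U ⊆ closure (E ∩ U) := by
  intro t ht
  rw [mem_closure_iff] at ht ⊢
  intro O hO htO
  obtain ⟨x, hxO, hxU⟩ := ht O hO htO
  by_contra hc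
  have hsub : O ∩ U ⊆ Eᶜ := fun z hz hzE => hc ⟨z, hz.1, hzE, hz.2⟩
  have hpos : 0 < volume (O ∩ U) := (hO.inter hU).measure_pos volume ⟨x, hxO, hxU⟩
  exact hpos.ne' (measure_mono_null hsub hE)

lemma chi_mul_self (τ x : ℝ) : chi τ x * chi τ x = chi τ x := by
  by_cases h : x ∈ Set.Ioo (-τ) τ <;> simp [chi, h]

lemma conj_chi (τ x : ℝ) : (starRingEnd ℂ) (chi τ x) = chi τ x := by
  by_cases h : x ∈ Set.Ioo (-τ) τ <;> simp [chi, h]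

theorem statement19 (T : L2op) (K : ℝ → ℝ → ℂ) (kt kt' : ℝ → L2)
    (hK : IsK0Kernel K kt kt') (hT : IsInducedBy T K)
    (tau : ℕ → ℝ) (P : ℕ → L2op) (hiv : ConditionIV K T tau P) (n : ℕ) :
    regularSet (P n * T) = regularSet (P n * T * P n) ∧
    ∀ lam ∈ regularSet (P n * T),
      ∀ (A B : ℝ → ℝ → ℂ) (at1 at2 bt1 bt2 : ℝ → L2),
        IsK0Kernel A at1 at2 → IsInducedBy (fres (P n * T) lam) A →
        IsK0Kernel B bt1 bt2 → IsInducedBy (fres (P n * T * P n) lam) B →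
        ∀ s t : ℝ, B s t = chi (tau n) t * A s t := by
  classical
  have hQQ : P n * P n = P n := by
    ext f
    rw [ContinuousLinearMap.mul_apply]
    filter_upwards [hiv.proj n (P n f), hiv.proj n f] with x hx1 hx2
    rw [hx1, hx2, ← mul_assoc, chi_mul_self, ← hx2]
  have key : ∀ lam : ℂ, IsUnit (1 - lam • (P n * T)) ↔ IsUnit (1 - lam • (P n * T * P n)) := by
    intro lam
    have e1 : lam • (P n * T) = P n * (lam • T) := (mul_smul_comm lam (P n) T).symm
    have e2 : lam • (P n * T * P n) = P n * (lam • T * P n) := by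
      rw [mul_assoc, ← mul_smul_comm, ← smul_mul_assoc]
    have e3 : (lam • T * P n) * P n = lam • T * P n := by
      rw [mul_assoc, hQQ]
    constructor
    · intro h
      rw [e1] at h
      rw [e2]
      have h2 := isUnit_one_sub_swap _ _ h
      rw [← e3] at h2
      exact isUnit_one_sub_swap _ _ h2
    · intro h
      rw [e2] at h
      rw [e1]
      have h2 := isUnit_one_sub_swap _ _ h
      rw [e3] at h2
      exact isUnit_one_sub_swap _ _ h2
  have hregeq : regularSet (P n * T) = regularSet (P n * T * P n) := Set.ext fun lam => key lam
  refine ⟨hregeq, ?_⟩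
  intro lam hlam A B at1 at2 bt1 bt2 hAk hA hBk hB
  have h1 : IsUnit (1 - lam • (P n * T)) := hlam
  have h2 : IsUnit (1 - lam • (P n * T * P n)) := (key lam).1 h1
  -- the operator identity:  fres (PTP) = fres (PT) ∘ P
  have hcomm : P n * (1 - lam • (P n * T * P n)) = (1 - lam • (P n * T)) * P n := by
    have e : P n * (P n * T * P n) = (P n * T) * P n := by
      simp only [← mul_assoc, hQQ]
    rw [mul_sub, sub_mul, mul_one, one_mul, mul_smul_comm, smul_mul_assoc, e]
  have hres : fres (P n * T * P n) lam = fres (P n * T) lam * P n := by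
    have hru : res (P n * T) lam = ↑h1.unit⁻¹ := by
      have := Ring.inverse_unit h1.unit
      rw [h1.unit_spec] at this
      rw [res, this]
    have hrv : res (P n * T * P n) lam = ↑h2.unit⁻¹ := by
      have := Ring.inverse_unit h2.unit
      rw [h2.unit_spec] at this
      rw [res, this]
    have h0 : P n * ↑h2.unit = ↑h1.unit * P n := by
      rw [h1.unit_spec, h2.unit_spec]; exact hcomm
    have hdiag : (↑h1.unit⁻¹ : L2op) * P n = P n * ↑h2.unit⁻¹ := by
      have h3 : (↑h1.unit⁻¹ : L2op) * (P n * ↑h2.unit) * ↑h2.unit⁻¹ =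
          ↑h1.unit⁻¹ * (↑h1.unit * P n) * ↑h2.unit⁻¹ := by rw [h0]
      simpa only [mul_assoc, Units.mul_inv, Units.inv_mul, mul_one,
        Units.inv_mul_cancel_left, Units.mul_inv_cancel_left] using h3
    rw [fres, fres, hru, hrv]
    calc (P n * T * P n) * ↑h2.unit⁻¹ = (P n * T) * (P n * ↑h2.unit⁻¹) := by
          simp only [mul_assoc]
      _ = (P n * T) * (↑h1.unit⁻¹ * P n) := by rw [← hdiag]
      _ = (P n * T) * ↑h1.unit⁻¹ * P n := by simp only [mul_assoc]
  -- key Carleman-function identity: bt1 s = P n (at1 s)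
  have hbtQ : ∀ s : ℝ, bt1 s = P n (at1 s) := by
    have main : ∀ f : L2, ∀ s : ℝ, (inner ℂ (bt1 s) f : ℂ) = inner ℂ (P n (at1 s)) f := by
      intro f
      have hop : fres (P n * T * P n) lam f = fres (P n * T) lam (P n f) := by
        rw [hres]; rfl
      have haeB : ∀ᵐ s2 : ℝ, (∫ t2, B s2 t2 * (f : ℝ → ℂ) t2) =
          ∫ t2, A s2 t2 * ((P n f : L2) : ℝ → ℂ) t2 := by
        filter_upwards [hB f, hA (P n f)] with s2 e1 e2
        rw [← e1, ← e2, hop]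
      have hid1 : ∀ s2 : ℝ, (∫ t2, B s2 t2 * (f : ℝ → ℂ) t2) = inner ℂ (bt1 s2) f := by
        intro s2
        rw [L2.inner_def]
        refine integral_congr_ae ?_
        filter_upwards [hBk.repr_t s2] with x hx
        rw [RCLike.inner_apply, hx]
        simp [mul_comm]
      have hid2 : ∀ s2 : ℝ, (∫ t2, A s2 t2 * ((P n f : L2) : ℝ → ℂ) t2) =
          inner ℂ (P n (at1 s2)) f := by
        intro s2
        rw [L2.inner_def]
        refine integral_congr_ae ?_
        filter_upwards [hAk.repr_t s2, hiv.proj n f, hiv.proj n (at1 s2)] with x hx hfx hax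
        rw [RCLike.inner_apply, hax, hfx, hx, map_mul, conj_chi]
        simp only [RingHomCompTriple.comp_apply, RingHom.id_apply, Complex.conj_conj]
        try ring
      have hcont1 : Continuous fun s2 : ℝ => (inner ℂ (bt1 s2) f : ℂ) :=
        hBk.cont_t.inner continuous_const
      have hcont2 : Continuous fun s2 : ℝ => (inner ℂ (P n (at1 s2)) f : ℂ) :=
        ((P n).continuous.comp hAk.cont_t).inner continuous_const
      have heq : (fun s2 : ℝ => (inner ℂ (bt1 s2) f : ℂ)) =
          fun s2 : ℝ => (inner ℂ (P n (at1 s2)) f : ℂ) := by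
        rw [← Continuous.ae_eq_iff_eq volume hcont1 hcont2]
        filter_upwards [haeB] with s2 h
        rw [← hid1 s2, ← hid2 s2]
        exact h
      exact fun s2 => congrFun heq s2
    intro s
    exact ext_inner_right ℂ fun f => main f s
  intro s t
  have haet : ∀ᵐ x : ℝ, B s x = chi (tau n) x * A s x := by
    have e4 : ((bt1 s : L2) : ℝ → ℂ) = ((P n (at1 s) : L2) : ℝ → ℂ) := by rw [hbtQ s]
    filter_upwards [hBk.repr_t s, hAk.repr_t s, hiv.proj n (at1 s)] with x hx1 hx2 hx3
    have h5 : (starRingEnd ℂ) (B s x) = chi (tau n) x * (starRingEnd ℂ) (A s x) := by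
      rw [← hx1, congrFun e4 x, hx3, hx2]
    have h6 := congrArg (starRingEnd ℂ) h5
    simpa [map_mul, conj_chi] using h6
  have hnull : volume {x : ℝ | B s x = chi (tau n) x * A s x}ᶜ = 0 := by
    rw [Set.compl_setOf]
    exact ae_iff.mp haet
  set E := {x : ℝ | B s x = chi (tau n) x * A s x} with hE
  have contB : Continuous fun x => B s x :=
    hBk.cont.comp (continuous_const.prodMk continuous_id)
  have contA : Continuous fun x => A s x :=
    hAk.cont.comp (continuous_const.prodMk continuous_id)
  by_cases ht : t ∈ Set.Ioo (-(tau n)) (tau n)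
  · have hchi : chi (tau n) t = 1 := by simp [chi, ht]
    have hC : IsClosed {x : ℝ | B s x = A s x} := isClosed_eq contB contA
    have h2 : E ∩ Set.Ioo (-(tau n)) (tau n) ⊆ {x : ℝ | B s x = A s x} := by
      rintro x ⟨hxE, hxI⟩
      have hc1 : chi (tau n) x = 1 := by simp [chi, hxI]
      have := hxE
      rw [hE] at this
      simpa [hc1] using this
    have h1 : closure (Set.Ioo (-(tau n)) (tau n)) ⊆
        closure (E ∩ Set.Ioo (-(tau n)) (tau n)) :=
      closure_subset_closure_inter isOpen_Ioo hnull
    have hBA : B s t = A s t :=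
      hC.closure_subset_iff.2 h2 (h1 (subset_closure ht))
    rw [hchi, one_mul]; exact hBA
  · have hchi : chi (tau n) t = 0 := by simp [chi, ht]
    rw [hchi, zero_mul]
    have hC0 : IsClosed {x : ℝ | B s x = 0} := isClosed_eq contB continuous_const
    rw [Set.mem_Ioo, not_and_or, not_lt, not_lt] at ht
    rcases ht with hle | hge
    · -- t ≤ -tau n
      have h2 : E ∩ Set.Iio (-(tau n)) ⊆ {x : ℝ | B s x = 0} := by
        rintro x ⟨hxE, hxI⟩
        have hc0 : chi (tau n) x = 0 := by
          have : x ∉ Set.Ioo (-(tau n)) (tau n) := by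
            simp only [Set.mem_Ioo, not_and_or, not_lt]
            exact Or.inl (le_of_lt hxI)
          simp [chi, this]
        have := hxE
        rw [hE] at this
        simpa [hc0] using this
      have h1 : closure (Set.Iio (-(tau n))) ⊆ closure (E ∩ Set.Iio (-(tau n))) :=
        closure_subset_closure_inter isOpen_Iio hnull
      have htmem : t ∈ closure (Set.Iio (-(tau n))) := by
        rw [closure_Iio]; exact hle
      exact hC0.closure_subset_iff.2 h2 (h1 htmem)
    · -- tau n ≤ t
      have h2 : E ∩ Set.Ioi (tau n) ⊆ {x : ℝ | B s x = 0} := by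
        rintro x ⟨hxE, hxI⟩
        have hc0 : chi (tau n) x = 0 := by
          have : x ∉ Set.Ioo (-(tau n)) (tau n) := by
            simp only [Set.mem_Ioo, not_and_or, not_lt]
            exact Or.inr (le_of_lt hxI)
          simp [chi, this]
        have := hxE
        rw [hE] at this
        simpa [hc0] using this
      have h1 : closure (Set.Ioi (tau n)) ⊆ closure (E ∩ Set.Ioi (tau n)) :=
        closure_subset_closure_inter isOpen_Ioi hnull
      have htmem : t ∈ closure (Set.Ioi (tau n)) := by
        rw [closure_Ioi]; exact hge
      exact hC0.closure_subset_iff.2 h2 (h1 htmem)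
end
end
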